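/- Let Ω ⊂ ℝP^{n} be a properly convex open set and Γ a discrete group of projective automorphisms acting properly discontinuously and cocompactly on Ω. Then Ω is maximal for inclusion among Γ-invariant properly convex open subsets of ℝP^n: if Ω' is a Γ-invariant properly convex open set containing Ω, then Ω' = Ω. -/

import Mathlib

set_option maxHeartbeats 1000000

/-- A version of `Matrix.mulVec` stated for the plain pi type, to avoid the
`Matrix` type synonym's instances in topological arguments. -/
noncomputable def mvF {n : ℕ} (B : Fin (n + 1) → Fin (n + 1) → ℝ)
    (x : Fin (n + 1) → ℝ) : Fin (n + 1) → ℝ :=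
  fun i => ∑ j, B i j * x j

lemma mvF_cont {n : ℕ} :
    Continuous fun q : (Fin (n + 1) → Fin (n + 1) → ℝ) × (Fin (n + 1) → ℝ) =>
      mvF q.1 q.2 := by
  refine continuous_pi fun i => continuous_finset_sum _ fun j _ => ?_
  exact (((continuous_apply j).comp ((continuous_apply i).comp continuous_fst))).mul
    ((continuous_apply j).comp continuous_snd)

lemma tendsto_mvF {n : ℕ} {Ms : ℕ → (Fin (n + 1) → Fin (n + 1) → ℝ)}
    {xs : ℕ → Fin (n + 1) → ℝ} {Mi : Fin (n + 1) → Fin (n + 1) → ℝ} {x : Fin (n + 1) → ℝ}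
    (hM : Filter.Tendsto Ms Filter.atTop (nhds Mi))
    (hx : Filter.Tendsto xs Filter.atTop (nhds x)) :
    Filter.Tendsto (fun k => mvF (Ms k) (xs k)) Filter.atTop (nhds (mvF Mi x)) := by
  apply tendsto_pi_nhds.mpr
  intro i
  apply tendsto_finset_sum
  intro j _
  exact (((continuous_apply j).comp (continuous_apply i)).tendsto Mi |>.comp hM).mul
    (((continuous_apply j).tendsto x).comp hx)

lemma mvF_smul {n : ℕ} (c : ℝ) (B : Fin (n + 1) → Fin (n + 1) → ℝ) (x) :
    mvF (c • B) x = c • mvF B x := by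
  funext i; simp [mvF, Finset.mul_sum, mul_assoc]

lemma mvF_addx {n : ℕ} (B : Fin (n + 1) → Fin (n + 1) → ℝ) (x y) :
    mvF B (x + y) = mvF B x + mvF B y := by
  funext i; simp [mvF, mul_add, Finset.sum_add_distrib]

lemma mvF_subx {n : ℕ} (B : Fin (n + 1) → Fin (n + 1) → ℝ) (x y) :
    mvF B (x - y) = mvF B x - mvF B y := by
  funext i; simp [mvF, mul_sub, Finset.sum_sub_distrib]

lemma mvF_smulx {n : ℕ} (c : ℝ) (B : Fin (n + 1) → Fin (n + 1) → ℝ) (x) :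
    mvF B (c • x) = c • mvF B x := by
  funext i; simp [mvF, Finset.mul_sum, mul_left_comm]

lemma mvF_single {n : ℕ} (B : Fin (n + 1) → Fin (n + 1) → ℝ) (i j) :
    mvF B (Pi.single j 1) i = B i j := by
  simp [mvF, Pi.single_apply]

/-- A set `C ⊆ ℝ^{n+1}` is a properly convex open cone if it is open, convex, nonempty,
invariant under positive scaling, and its closure is contained (away from `0`) in an open
linear half-space.  Rays of such a cone are exactly the points of a properly convex open
subset of `ℝP^n`. -/
def IsProperlyConvexCone {n : ℕ} (C : Set (Fin (n + 1) → ℝ)) : Prop :=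
  IsOpen C ∧ Convex ℝ C ∧ C.Nonempty ∧
    (∀ v ∈ C, ∀ t : ℝ, 0 < t → t • v ∈ C) ∧
    ∃ f : (Fin (n + 1) → ℝ) →ₗ[ℝ] ℝ, ∀ v ∈ closure C, v ≠ 0 → 0 < f v

/-- Let `Ω ⊂ ℝP^n` be a properly convex open set (encoded by its cone `C`)
and `Γ` a discrete group of projective automorphisms (a subgroup of `GL_{n+1}(ℝ)`) acting
properly discontinuously and cocompactly on `Ω`.  Then `Ω` is maximal among `Γ`-invariant
properly convex open subsets of `ℝP^n`: any `Γ`-invariant properly convex open set `Ω'`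
containing `Ω` equals `Ω`.  Proper discontinuity and cocompactness of the projective action
are phrased via compact sets of nonzero vector representatives of rays. -/
theorem divisible_convex_maximal {n : ℕ}
    (Γ : Subgroup (Matrix.GeneralLinearGroup (Fin (n + 1)) ℝ))
    (C C' : Set (Fin (n + 1) → ℝ))
    (hC : IsProperlyConvexCone C) (hC' : IsProperlyConvexCone C')
    (hinv : ∀ γ ∈ Γ, (γ : Matrix (Fin (n + 1)) (Fin (n + 1)) ℝ).mulVec '' C = C)
    (hinv' : ∀ γ ∈ Γ, (γ : Matrix (Fin (n + 1)) (Fin (n + 1)) ℝ).mulVec '' C' = C')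
    -- the action of `Γ` on `Ω` is properly discontinuous:
    (hproper : ∀ K : Set (Fin (n + 1) → ℝ), IsCompact K → (0 : Fin (n + 1) → ℝ) ∉ K →
      K ⊆ C → Set.Finite {γ : Γ | ∃ v ∈ K, ∃ t : ℝ, 0 < t ∧
        t • ((γ : Matrix.GeneralLinearGroup (Fin (n + 1)) ℝ) :
          Matrix (Fin (n + 1)) (Fin (n + 1)) ℝ).mulVec v ∈ K})
    -- the action of `Γ` on `Ω` is cocompact:
    (hcocpt : ∃ K : Set (Fin (n + 1) → ℝ), IsCompact K ∧ (0 : Fin (n + 1) → ℝ) ∉ K ∧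
      K ⊆ C ∧ ∀ v ∈ C, ∃ γ ∈ Γ, ∃ t : ℝ, 0 < t ∧
        t • ((γ : Matrix (Fin (n + 1)) (Fin (n + 1)) ℝ)).mulVec v ∈ K)
    (hsub : C ⊆ C') :
    C' = C := by
  classical
  obtain ⟨hCopen, hCconv, ⟨p, hpC⟩, hCcone, f, hf⟩ := hC
  obtain ⟨hC'open, hC'conv, hC'ne, hC'cone, f', hf'⟩ := hC'
  obtain ⟨K, hKcpt, hK0, hKC, hKco⟩ := hcocpt
  -- Key step: `C` is relatively closed in `C'`.
  have key : ∀ v ∈ C', v ∈ closure C → v ∈ C := by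
    intro v hvC' hvcl
    -- a sequence in `C` converging to `v`
    set a : ℕ → ℝ := fun k => ((k : ℝ) + 1)⁻¹ with ha
    have ha_pos : ∀ k, 0 < a k := by intro k; positivity
    have ha_le : ∀ k, a k ≤ 1 := by
      intro k
      rw [ha]
      rw [inv_le_one_iff₀]
      right
      have : (0 : ℝ) ≤ (k : ℝ) := Nat.cast_nonneg k
      linarith
    have ha_tendsto : Filter.Tendsto a Filter.atTop (nhds 0) := by
      have h1 : Filter.Tendsto (fun k : ℕ => (k : ℝ) + 1) Filter.atTop Filter.atTop :=
        Filter.tendsto_atTop_add_const_right _ 1 tendsto_natCast_atTop_atTop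
      exact h1.inv_tendsto_atTop
    set vs : ℕ → (Fin (n + 1) → ℝ) := fun k => a k • p + (1 - a k) • v with hvs_def
    have hvsC : ∀ k, vs k ∈ C := by
      intro k
      have hb : (0:ℝ) ≤ 1 - a k := by linarith [ha_le k]
      have hab : a k + (1 - a k) = 1 := by ring
      have hpint : p ∈ interior C := by rwa [hCopen.interior_eq]
      have := hCconv.combo_interior_closure_mem_interior hpint hvcl (ha_pos k) hb hab
      rwa [hCopen.interior_eq] at this
    have hvs_tendsto : Filter.Tendsto vs Filter.atTop (nhds v) := by
      have h1 : Filter.Tendsto (fun k => a k • p) Filter.atTop (nhds ((0 : ℝ) • p)) :=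
        ha_tendsto.smul_const p
      have h2 : Filter.Tendsto (fun k => (1 - a k) • v) Filter.atTop (nhds ((1 - 0 : ℝ) • v)) :=
        (tendsto_const_nhds.sub ha_tendsto).smul_const v
      have := h1.add h2
      simpa using this
    -- apply cocompactness to each `vs k`
    choose γ hγΓ t ht hw using fun k => hKco (vs k) (hvsC k)
    set A : ℕ → (Fin (n + 1) → Fin (n + 1) → ℝ) :=
      fun k => fun i j => (γ k : Matrix (Fin (n + 1)) (Fin (n + 1)) ℝ) i j with hA
    have hAmv : ∀ k x, mvF (A k) x
        = (γ k : Matrix (Fin (n + 1)) (Fin (n + 1)) ℝ).mulVec x := fun k x => rfl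
    have hAne : ∀ k, A k ≠ 0 := by
      intro k h
      exact Units.ne_zero (γ k) (by funext i j; exact congrFun (congrFun h i) j)
    set nrm : ℕ → ℝ := fun k => ‖A k‖ with hnrm
    have hnrm_pos : ∀ k, 0 < nrm k := fun k => norm_pos_iff.mpr (hAne k)
    set M : ℕ → (Fin (n + 1) → Fin (n + 1) → ℝ) := fun k => (nrm k)⁻¹ • A k with hM
    have hMapp : ∀ k x, mvF (M k) x = (nrm k)⁻¹ • (mvF (A k) x) :=
      fun k x => mvF_smul _ _ _
    have hMsph : ∀ k, M k ∈ Metric.sphere (0 : Fin (n + 1) → Fin (n + 1) → ℝ) 1 := by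
      intro k
      have hMk : M k = (nrm k)⁻¹ • A k := rfl
      rw [mem_sphere_zero_iff_norm, hMk, norm_smul, norm_inv, Real.norm_eq_abs,
        abs_of_pos (hnrm_pos k)]
      exact inv_mul_cancel₀ (ne_of_gt (hnrm_pos k))
    set w : ℕ → (Fin (n + 1) → ℝ) := fun k => t k • mvF (A k) (vs k) with hwdef
    have hwK : ∀ k, w k ∈ K := hw
    -- extract a convergent subsequence of the pair (normalized matrix, image point)
    obtain ⟨⟨Mi, wi⟩, hmem, φ, hφ, hconv⟩ :=
      ((isCompact_sphere (0 : Fin (n + 1) → Fin (n + 1) → ℝ) 1).prod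
        hKcpt).tendsto_subseq (x := fun k => (M k, w k))
        (fun k => Set.mk_mem_prod (hMsph k) (hwK k))
    have hMconv : Filter.Tendsto (fun k => M (φ k)) Filter.atTop (nhds Mi) :=
      (continuous_fst.tendsto _).comp hconv
    have hwconv : Filter.Tendsto (fun k => w (φ k)) Filter.atTop (nhds wi) :=
      (continuous_snd.tendsto _).comp hconv
    have hMinorm : ‖Mi‖ = 1 := mem_sphere_zero_iff_norm.mp hmem.1
    have hwiK : wi ∈ K := hmem.2
    have hwine : wi ≠ 0 := fun h => hK0 (h ▸ hwiK)
    -- the normalized matrices map points of C' into C'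
    have hMC' : ∀ k, ∀ x ∈ C', mvF (M k) x ∈ C' := by
      intro k x hx
      have h1 : mvF (A k) x ∈ C' := by
        rw [hAmv, ← hinv' (γ k) (hγΓ k)]; exact ⟨x, hx, rfl⟩
      have h2 := hC'cone _ h1 (nrm k)⁻¹ (inv_pos.mpr (hnrm_pos k))
      rw [hMapp k x]
      exact h2
    -- the limit matrix maps C' into the closure of C'
    have hlimC' : ∀ x ∈ C', mvF Mi x ∈ closure C' := by
      intro x hx
      have htd : Filter.Tendsto (fun k => mvF (M (φ k)) x) Filter.atTop
          (nhds (mvF Mi x)) := tendsto_mvF hMconv tendsto_const_nhds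
      exact mem_closure_of_tendsto htd
        (Filter.Eventually.of_forall fun k => hMC' (φ k) x hx)
    -- `mvF Mi v ≠ 0` (this is where proper convexity of `C'` is used)
    have hMiv : mvF Mi v ≠ 0 := by
      intro h0
      -- find a direction not killed by `Mi`
      obtain ⟨u, hu⟩ : ∃ u, mvF Mi u ≠ 0 := by
        by_contra hcon
        push_neg at hcon
        have hzero : Mi = 0 := by
          funext i j
          have := congrFun (hcon (Pi.single j 1)) i
          rw [mvF_single] at this
          exact this
        rw [hzero] at hMinorm
        simp at hMinorm
      obtain ⟨δ, hδ, hball⟩ := Metric.isOpen_iff.mp hC'open v hvC'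
      set ε : ℝ := δ / (2 * (‖u‖ + 1)) with hε_def
      have hε : 0 < ε := by positivity
      have hdist : ‖ε • u‖ < δ := by
        rw [norm_smul, Real.norm_eq_abs, abs_of_pos hε, hε_def]
        have h1 : ‖u‖ < ‖u‖ + 1 := by linarith
        have h2 : (0:ℝ) < ‖u‖ + 1 := by positivity
        calc δ / (2 * (‖u‖ + 1)) * ‖u‖ < δ / (2 * (‖u‖ + 1)) * (‖u‖ + 1) := by
              apply mul_lt_mul_of_pos_left h1; positivity
          _ = δ / 2 := by field_simp
          _ < δ := by linarith
      have h₁ : v + ε • u ∈ C' := by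
        apply hball
        simp only [Metric.mem_ball, dist_eq_norm, add_sub_cancel_left]
        exact hdist
      have h₂ : v - ε • u ∈ C' := by
        apply hball
        simp only [Metric.mem_ball, dist_eq_norm, sub_sub_cancel_left, norm_neg]
        simpa using hdist
      have e₁ : mvF Mi (v + ε • u) = ε • mvF Mi u := by
        rw [mvF_addx, mvF_smulx, h0, zero_add]
      have e₂ : mvF Mi (v - ε • u) = -(ε • mvF Mi u) := by
        rw [mvF_subx, mvF_smulx, h0, zero_sub]
      have hne : ε • mvF Mi u ≠ 0 := smul_ne_zero (ne_of_gt hε) hu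
      have c₁ : ε • mvF Mi u ∈ closure C' := by rw [← e₁]; exact hlimC' _ h₁
      have c₂ : -(ε • mvF Mi u) ∈ closure C' := by rw [← e₂]; exact hlimC' _ h₂
      have p₁ := hf' _ c₁ hne
      have p₂ := hf' _ c₂ (neg_ne_zero.mpr hne)
      rw [map_neg] at p₂
      linarith
    -- identify the limit of the images: `wi = ti • mvF Mi v`
    set y : ℕ → (Fin (n + 1) → ℝ) := fun k => mvF (M (φ k)) (vs (φ k)) with hy
    have hytd : Filter.Tendsto y Filter.atTop (nhds (mvF Mi v)) := by
      have hvφ : Filter.Tendsto (fun k => vs (φ k)) Filter.atTop (nhds v) :=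
        hvs_tendsto.comp hφ.tendsto_atTop
      exact tendsto_mvF hMconv hvφ
    set s : ℕ → ℝ := fun k => t (φ k) * nrm (φ k) with hs
    have hs_pos : ∀ k, 0 < s k := fun k => mul_pos (ht (φ k)) (hnrm_pos (φ k))
    have hws : ∀ k, w (φ k) = s k • y k := by
      intro k
      show t (φ k) • mvF (A (φ k)) (vs (φ k))
        = (t (φ k) * nrm (φ k)) • mvF (M (φ k)) (vs (φ k))
      rw [hMapp, smul_smul, mul_assoc, mul_inv_cancel₀ (ne_of_gt (hnrm_pos (φ k))), mul_one]
    set ti : ℝ := ‖wi‖ / ‖mvF Mi v‖ with hti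
    have hMivnorm : 0 < ‖mvF Mi v‖ := norm_pos_iff.mpr hMiv
    have hstend : Filter.Tendsto s Filter.atTop (nhds ti) := by
      have hratio : Filter.Tendsto (fun k => ‖w (φ k)‖ / ‖y k‖) Filter.atTop (nhds ti) :=
        (hwconv.norm).div (hytd.norm) (ne_of_gt hMivnorm)
      apply hratio.congr'
      have hev : ∀ᶠ k in Filter.atTop, y k ≠ 0 := hytd.eventually_ne hMiv
      filter_upwards [hev] with k hk
      rw [hws k, norm_smul, Real.norm_eq_abs, abs_of_pos (hs_pos k),
        mul_div_assoc, div_self (norm_ne_zero_iff.mpr hk), mul_one]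
    have hlim2 : Filter.Tendsto (fun k => s k • y k) Filter.atTop (nhds (ti • mvF Mi v)) :=
      hstend.smul hytd
    have hwi_eq : wi = ti • mvF Mi v := by
      apply tendsto_nhds_unique _ hlim2
      exact hwconv.congr fun k => hws k
    have hti_pos : 0 < ti := by
      rw [hti]
      exact div_pos (norm_pos_iff.mpr hwine) hMivnorm
    -- hence `mvF Mi v ∈ C`
    have hyC : mvF Mi v ∈ C := by
      have heq : mvF Mi v = ti⁻¹ • wi := by
        rw [hwi_eq, smul_smul, inv_mul_cancel₀ (ne_of_gt hti_pos), one_smul]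
      rw [heq]
      exact hCcone wi (hKC hwiK) ti⁻¹ (inv_pos.mpr hti_pos)
    -- so for large `k`, `mvF (M (φ k)) v ∈ C`, which forces `v ∈ C`
    have hztd : Filter.Tendsto (fun k => mvF (M (φ k)) v) Filter.atTop
        (nhds (mvF Mi v)) := tendsto_mvF hMconv tendsto_const_nhds
    have hev2 : ∀ᶠ k in Filter.atTop, mvF (M (φ k)) v ∈ C :=
      hztd.eventually (hCopen.eventually_mem hyC)
    obtain ⟨k, hk⟩ := hev2.exists
    have h1 : mvF (A (φ k)) v ∈ C := by
      have h2 := hCcone _ hk (nrm (φ k)) (hnrm_pos (φ k))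
      rw [hMapp, smul_smul, mul_inv_cancel₀ (ne_of_gt (hnrm_pos (φ k))), one_smul] at h2
      exact h2
    have h1' : ((γ (φ k) : Matrix (Fin (n + 1)) (Fin (n + 1)) ℝ)).mulVec v ∈ C := by
      rw [← hAmv]; exact h1
    have hγinv := hinv _ (inv_mem (hγΓ (φ k)))
    have h3 : (((γ (φ k))⁻¹ : Matrix.GeneralLinearGroup (Fin (n + 1)) ℝ) :
        Matrix (Fin (n + 1)) (Fin (n + 1)) ℝ).mulVec
          (((γ (φ k) : Matrix (Fin (n + 1)) (Fin (n + 1)) ℝ)).mulVec v) ∈ C := by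
      rw [← hγinv]; exact ⟨_, h1', rfl⟩
    rwa [Matrix.mulVec_mulVec, Units.inv_mul, Matrix.one_mulVec] at h3
  -- conclude by connectedness of `C'`
  apply Set.Subset.antisymm _ hsub
  rcases Set.eq_empty_or_nonempty (C' ∩ (closure C)ᶜ) with he | hne2
  · intro x hx
    have hxcl : x ∈ closure C := by
      by_contra hxc
      exact Set.eq_empty_iff_forall_notMem.mp he x ⟨hx, hxc⟩
    exact key x hx hxcl
  · exfalso
    have hcover : C' ⊆ C ∪ (closure C)ᶜ := by
      intro x hx
      by_cases h : x ∈ closure C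
      · exact Or.inl (key x hx h)
      · exact Or.inr h
    obtain ⟨x, hx⟩ := hC'conv.isPreconnected C (closure C)ᶜ hCopen
      isClosed_closure.isOpen_compl hcover ⟨p, hsub hpC, hpC⟩ hne2
    exact hx.2.2 (subset_closure hx.2.1)
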